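/- Let M' be a square nonnegative matrix in block form M' = [[M, A],[B, C]] with M square, and suppose M' is primitive (some power of M' is entrywise positive). Then not both A and B are zero matrices, and the Perron–Frobenius eigenvalue (spectral radius) of M is strictly less than that of M'. -/

import Mathlib

set_option linter.unusedSectionVars false
set_option maxHeartbeats 1600000

/-- The Perron–Frobenius eigenvalue (spectral radius) of a real square matrix:
the supremum of the moduli of its complex eigenvalues. -/
noncomputable def perronRoot {n : Type*} [Fintype n] [DecidableEq n]
    (M : Matrix n n ℝ) : ℝ :=
  sSup {r : ℝ | ∃ μ : ℂ, (M.map (Complex.ofReal)).charpoly.IsRoot μ ∧ r = ‖μ‖}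

open Matrix Polynomial Filter Topology Finset

namespace PFaux
variable {n : Type*} [Fintype n] [DecidableEq n]

lemma pow_entry_nonneg {N : Matrix n n ℝ} (h : ∀ i j, 0 ≤ N i j) (t : ℕ) :
    ∀ i j, 0 ≤ (N ^ t) i j := by
  induction t with
  | zero => intro i j; by_cases hij : i = j <;> simp [pow_zero, Matrix.one_apply, hij]
  | succ t ih =>
    intro i j
    rw [pow_succ, Matrix.mul_apply]
    exact Finset.sum_nonneg fun a _ => mul_nonneg (ih i a) (h a j)

lemma mul_entry_le_mul {A A' B B' : Matrix n n ℝ}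
    (hA0 : ∀ i j, 0 ≤ A i j) (hB0 : ∀ i j, 0 ≤ B i j)
    (hA : ∀ i j, A i j ≤ A' i j) (hB : ∀ i j, B i j ≤ B' i j) :
    ∀ i j, (A * B) i j ≤ (A' * B') i j := by
  intro i j
  rw [Matrix.mul_apply, Matrix.mul_apply]
  refine Finset.sum_le_sum fun a _ => ?_
  exact mul_le_mul (hA i a) (hB a j) (hB0 a j) ((hA0 i a).trans (hA i a))

lemma pow_pos_of_pos {N : Matrix n n ℝ} (hN : ∀ i j, 0 ≤ N i j) {k : ℕ} (hk : 1 ≤ k)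
    (hpos : ∀ i j, 0 < (N ^ k) i j) : ∀ t, k ≤ t → ∀ i j, 0 < (N ^ t) i j := by
  have hcol : ∀ j, ∃ a, 0 < N a j := by
    intro j
    by_contra hcon
    push_neg at hcon
    have hcol0 : ∀ a, N a j = 0 := fun a => le_antisymm (hcon a) (hN a j)
    obtain ⟨k', rfl⟩ := Nat.exists_eq_add_of_le hk
    have : (N ^ (1 + k')) j j = 0 := by
      rw [add_comm, pow_succ, Matrix.mul_apply]
      exact Finset.sum_eq_zero fun a _ => by rw [hcol0 a, mul_zero]
    exact absurd (hpos j j) (by rw [this]; exact lt_irrefl 0)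
  intro t ht
  induction t, ht using Nat.le_induction with
  | base => exact hpos
  | succ t ht ih =>
    intro i j
    obtain ⟨a, ha⟩ := hcol j
    rw [pow_succ, Matrix.mul_apply]
    refine Finset.sum_pos' (fun b _ => mul_nonneg (pow_entry_nonneg hN t i b) (hN b j)) ?_
    exact ⟨a, Finset.mem_univ a, mul_pos (ih i a) ha⟩

lemma diag_pow_ge {A : Matrix n n ℝ} (hA : ∀ i j, 0 ≤ A i j) (i : n) (s : ℕ) :
    A i i ^ s ≤ (A ^ s) i i := by
  induction s with
  | zero => simp
  | succ s ih =>
    rw [pow_succ, pow_succ, Matrix.mul_apply]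
    calc A i i ^ s * A i i ≤ (A ^ s) i i * A i i :=
          mul_le_mul_of_nonneg_right ih (hA i i)
      _ ≤ ∑ a, (A ^ s) i a * A a i :=
          Finset.single_le_sum (f := fun a => (A ^ s) i a * A a i)
            (fun a _ => mul_nonneg (pow_entry_nonneg hA s i a) (hA a i)) (Finset.mem_univ i)

def S (X : Matrix n n ℝ) : Set ℝ :=
  {r : ℝ | ∃ μ : ℂ, (X.map (Complex.ofReal)).charpoly.IsRoot μ ∧ r = ‖μ‖}

lemma perronRoot_def (X : Matrix n n ℝ) : perronRoot X = sSup (S X) := rfl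

lemma S_finite (X : Matrix n n ℝ) : (S X).Finite := by
  have h1 : (S X) ⊆ (fun μ => ‖μ‖) ''
      {μ : ℂ | (X.map Complex.ofReal).charpoly.IsRoot μ} := by
    rintro r ⟨μ, hμ, rfl⟩; exact ⟨μ, hμ, rfl⟩
  exact Set.Finite.subset (Set.Finite.image _
    (Polynomial.finite_setOf_isRoot (X.map Complex.ofReal).charpoly_monic.ne_zero)) h1

lemma S_nonempty [Nonempty n] (X : Matrix n n ℝ) : (S X).Nonempty := by
  have hdeg : 0 < (X.map Complex.ofReal).charpoly.degree := by
    rw [Matrix.charpoly_degree_eq_dim]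
    exact_mod_cast Fintype.card_pos
  obtain ⟨μ, hμ⟩ := Complex.exists_root hdeg
  exact ⟨‖μ‖, μ, hμ, rfl⟩

lemma le_perronRoot' {X : Matrix n n ℝ} {μ : ℂ}
    (h : (X.map Complex.ofReal).charpoly.IsRoot μ) : ‖μ‖ ≤ perronRoot X :=
  le_csSup (S_finite X).bddAbove ⟨μ, h, rfl⟩

lemma perronRoot_le [Nonempty n] {X : Matrix n n ℝ} {b : ℝ}
    (hb : ∀ μ : ℂ, (X.map Complex.ofReal).charpoly.IsRoot μ → ‖μ‖ ≤ b) :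
    perronRoot X ≤ b := by
  refine csSup_le (S_nonempty X) ?_
  rintro r ⟨μ, hμ, rfl⟩
  exact hb μ hμ

lemma perronRoot_nonneg [Nonempty n] (X : Matrix n n ℝ) : 0 ≤ perronRoot X := by
  obtain ⟨r, hr⟩ := S_nonempty X
  obtain ⟨μ, hμ, rfl⟩ := hr
  exact (norm_nonneg _).trans (le_perronRoot' hμ)

lemma eval_charpoly (A : Matrix n n ℂ) (μ : ℂ) :
    A.charpoly.eval μ = (μ • (1 : Matrix n n ℂ) - A).det := by
  rw [Matrix.charpoly, ← Polynomial.coe_evalRingHom, RingHom.map_det]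
  congr 1
  ext i j
  by_cases h : i = j <;> simp [h, charmatrix_apply, Matrix.one_apply, Matrix.diagonal_apply]

lemma exists_eigenvector (A : Matrix n n ℂ) {μ : ℂ} (h : A.charpoly.IsRoot μ) :
    ∃ v : n → ℂ, v ≠ 0 ∧ A.mulVec v = μ • v := by
  have hdet : (μ • (1 : Matrix n n ℂ) - A).det = 0 := by
    rw [← h.eq_zero, eval_charpoly]
  obtain ⟨v, hv0, hv⟩ := (Matrix.exists_mulVec_eq_zero_iff).2 hdet
  refine ⟨v, hv0, ?_⟩
  rw [Matrix.sub_mulVec, sub_eq_zero] at hv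
  rw [← hv, Matrix.smul_mulVec, Matrix.one_mulVec]

attribute [local instance] Matrix.linftyOpNormedRing Matrix.linftyOpNormedAlgebra

noncomputable local instance : CompleteSpace (Matrix n n ℂ) :=
  (by infer_instance : CompleteSpace (n → n → ℂ))

lemma spectralRadius_toReal_le [Nonempty n] (N : Matrix n n ℝ) :
    (spectralRadius ℂ (N.map Complex.ofReal)).toReal ≤ perronRoot N := by
  set a := N.map Complex.ofReal with ha
  have h1 : spectralRadius ℂ a ≤ ENNReal.ofReal (perronRoot N) := by
    rw [spectralRadius]
    refine iSup₂_le fun μ hμ => ?_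
    have hroot : a.charpoly.IsRoot μ := by
      rw [spectrum.mem_iff] at hμ
      have hdet : (algebraMap ℂ (Matrix n n ℂ) μ - a).det = 0 := by
        by_contra hd
        exact hμ ((Matrix.isUnit_iff_isUnit_det _).2 (isUnit_iff_ne_zero.2 hd))
      rw [Algebra.algebraMap_eq_smul_one] at hdet
      exact (Polynomial.IsRoot.def).2 (by rw [eval_charpoly]; exact hdet)
    have habs : ‖μ‖ ≤ perronRoot N := le_perronRoot' hroot
    calc (‖μ‖₊ : ENNReal) = ENNReal.ofReal ‖μ‖ := by
          rw [← coe_nnnorm, ENNReal.ofReal_coe_nnreal]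
      _ ≤ _ := ENNReal.ofReal_le_ofReal habs
  exact ENNReal.toReal_le_of_le_ofReal (perronRoot_nonneg N) h1

lemma map_pow' (N : Matrix n n ℝ) (t : ℕ) :
    (N.map Complex.ofReal) ^ t = (N ^ t).map Complex.ofReal := by
  have : N.map Complex.ofReal = Complex.ofRealHom.mapMatrix N := rfl
  rw [this, ← map_pow]
  rfl

lemma norm_map_complex (X : Matrix n n ℝ) : ‖X.map Complex.ofReal‖ = ‖X‖ := by
  rw [Matrix.linfty_opNorm_def, Matrix.linfty_opNorm_def]
  congr 2
  ext i
  congr 1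
  ext j
  simp [Matrix.map_apply]

lemma row_sum_le_norm {X : Matrix n n ℝ} (hX : ∀ i j, 0 ≤ X i j) (i : n) :
    ∑ j, X i j ≤ ‖X‖ := by
  rw [Matrix.linfty_opNorm_def]
  calc ∑ j, X i j = ((∑ j, ‖X i j‖₊ : NNReal) : ℝ) := by
        push_cast
        exact Finset.sum_congr rfl fun j _ => (Real.norm_of_nonneg (hX i j)).symm
    _ ≤ _ := by
        exact_mod_cast NNReal.coe_le_coe.2
          (Finset.le_sup (f := fun i => ∑ j, ‖X i j‖₊) (Finset.mem_univ i))

lemma entry_le_norm {X : Matrix n n ℝ} (hX : ∀ i j, 0 ≤ X i j) (i j : n) :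
    X i j ≤ ‖X‖ :=
  le_trans (Finset.single_le_sum (f := fun j => X i j) (fun a _ => hX i a) (Finset.mem_univ j))
    (row_sum_le_norm hX i)

lemma gelfand [Nonempty n] (N : Matrix n n ℝ) :
    Tendsto (fun t : ℕ => ‖N ^ t‖ ^ (1 / t : ℝ)) atTop
      (𝓝 (spectralRadius ℂ (N.map Complex.ofReal)).toReal) := by
  set a := N.map Complex.ofReal with ha
  have h := spectrum.pow_norm_pow_one_div_tendsto_nhds_spectralRadius a
  have hρ : spectralRadius ℂ a ≠ ⊤ :=
    ((spectrum.spectralRadius_le_nnnorm (𝕜 := ℂ) a).trans_lt ENNReal.coe_lt_top).ne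
  have h2 := (ENNReal.tendsto_toReal hρ).comp h
  convert h2 using 2 with t
  rw [Function.comp_apply, ENNReal.toReal_ofReal (by positivity)]
  rw [ha, map_pow', norm_map_complex]

lemma mul_le_scaled {D1 D2 N1 N2 : Matrix n n ℝ} {r r' : ℝ}
    (hD1 : ∀ i j, 0 ≤ D1 i j) (hD2 : ∀ i j, 0 ≤ D2 i j)
    (h1 : ∀ i j, D1 i j ≤ r * N1 i j) (h2 : ∀ i j, D2 i j ≤ r' * N2 i j) :
    ∀ i j, (D1 * D2) i j ≤ (r * r') * (N1 * N2) i j := by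
  intro i j
  rw [Matrix.mul_apply, Matrix.mul_apply, Finset.mul_sum]
  refine Finset.sum_le_sum fun a _ => ?_
  calc D1 i a * D2 a j ≤ (r * N1 i a) * (r' * N2 a j) :=
        mul_le_mul (h1 i a) (h2 a j) (hD2 a j) ((hD1 i a).trans (h1 i a))
    _ = r * r' * (N1 i a * N2 a j) := by ring

lemma pow_entry_le {D N : Matrix n n ℝ} (hD0 : ∀ i j, 0 ≤ D i j)
    (hDN : ∀ i j, D i j ≤ N i j) (t : ℕ) : ∀ i j, (D ^ t) i j ≤ (N ^ t) i j := by
  induction t with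
  | zero => intro i j; simp
  | succ t ih =>
    rw [pow_succ, pow_succ]
    exact mul_entry_le_mul (pow_entry_nonneg hD0 t) hD0 ih hDN

lemma triple_apply (A B C : Matrix n n ℝ) (i j : n) :
    (A * B * C) i j = ∑ x, ∑ y, A i x * B x y * C y j := by
  rw [Matrix.mul_apply, Finset.sum_comm]
  refine Finset.sum_congr rfl fun y _ => ?_
  rw [Matrix.mul_apply, Finset.sum_mul]


theorem key [Nonempty n] {D N : Matrix n n ℝ}
    (hD0 : ∀ i j, 0 ≤ D i j) (hDN : ∀ i j, D i j ≤ N i j)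
    (hne : ∃ a b, D a b < N a b)
    {k : ℕ} (hk : 1 ≤ k) (hkpos : ∀ i j, 0 < (N ^ k) i j) :
    perronRoot D < perronRoot N := by
  classical
  have hN0 : ∀ i j, 0 ≤ N i j := fun i j => (hD0 i j).trans (hDN i j)
  set m := 2 * k + 1 with hm
  have hkm : k ≤ m := by omega
  have hm1 : 1 ≤ m := by omega
  have hNm : ∀ i j, 0 < (N ^ m) i j := pow_pos_of_pos hN0 hk hkpos m hkm
  obtain ⟨a, b, hab⟩ := hne
  set c : ℝ := N a b - D a b with hc
  have hcpos : 0 < c := sub_pos.2 hab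
  set f : n × n → ℝ := fun p => (N ^ k) p.1 a * c * (N ^ k) b p.2 / (N ^ m) p.1 p.2 with hf
  have huniv : (Finset.univ : Finset (n × n)).Nonempty := Finset.univ_nonempty
  set ε : ℝ := Finset.univ.inf' huniv f with hε
  have hεpos : 0 < ε := by
    rw [hε, Finset.lt_inf'_iff]
    intro p _
    exact div_pos (mul_pos (mul_pos (hkpos p.1 a) hcpos) (hkpos b p.2)) (hNm p.1 p.2)
  have hεle : ∀ i j, ε * (N ^ m) i j ≤ (N ^ k) i a * c * (N ^ k) b j := by
    intro i j
    have h1 : ε ≤ f (i, j) := Finset.inf'_le f (Finset.mem_univ (i, j))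
    have h2 : f (i, j) * (N ^ m) i j = (N ^ k) i a * c * (N ^ k) b j :=
      div_mul_cancel₀ _ (hNm i j).ne'
    calc ε * (N ^ m) i j ≤ f (i, j) * (N ^ m) i j :=
          mul_le_mul_of_nonneg_right h1 (hNm i j).le
      _ = _ := h2
  have hDk0 := pow_entry_nonneg hD0
  have hNk0 := pow_entry_nonneg hN0
  have hDkNk := pow_entry_le hD0 hDN
  -- step : D^m ≤ (1-ε) N^m entrywise
  have hstep : ∀ i j, (D ^ m) i j ≤ (1 - ε) * (N ^ m) i j := by
    intro i j
    have e1 : D ^ m = D ^ k * D * D ^ k := by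
      rw [← pow_succ, ← pow_add, hm]
      congr 1
      omega
    have e2 : N ^ m = N ^ k * N * N ^ k := by
      rw [← pow_succ, ← pow_add, hm]
      congr 1
      omega
    have h1 : (D ^ m) i j ≤ (N ^ k * D * N ^ k) i j := by
      rw [e1]
      exact mul_entry_le_mul
        (fun i j => by
          rw [Matrix.mul_apply]
          exact Finset.sum_nonneg fun x _ => mul_nonneg (hDk0 k i x) (hD0 x j))
        (hDk0 k)
        (mul_entry_le_mul (hDk0 k) hD0 (hDkNk k) (fun i j => le_rfl))
        (hDkNk k) i j
    have h2 : (N ^ k * D * N ^ k) i j + (N ^ k) i a * c * (N ^ k) b j ≤ (N ^ m) i j := by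
      rw [e2, triple_apply, triple_apply]
      have hg0 : ∀ x y, 0 ≤ (N ^ k) i x * (N x y - D x y) * (N ^ k) y j := fun x y =>
        mul_nonneg (mul_nonneg (hNk0 k i x) (sub_nonneg.2 (hDN x y))) (hNk0 k y j)
      have hgab : (N ^ k) i a * c * (N ^ k) b j
          ≤ ∑ x, ∑ y, (N ^ k) i x * (N x y - D x y) * (N ^ k) y j := by
        calc (N ^ k) i a * c * (N ^ k) b j
            = (N ^ k) i a * (N a b - D a b) * (N ^ k) b j := by rw [hc]
          _ ≤ ∑ y, (N ^ k) i a * (N a y - D a y) * (N ^ k) y j :=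
              Finset.single_le_sum (fun y _ => hg0 a y) (Finset.mem_univ b)
          _ ≤ _ :=
              Finset.single_le_sum
                (f := fun x => ∑ y, (N ^ k) i x * (N x y - D x y) * (N ^ k) y j)
                (fun x _ => Finset.sum_nonneg fun y _ => hg0 x y) (Finset.mem_univ a)
      have hsub : (∑ x, ∑ y, (N ^ k) i x * N x y * (N ^ k) y j)
          - (∑ x, ∑ y, (N ^ k) i x * D x y * (N ^ k) y j)
          = ∑ x, ∑ y, (N ^ k) i x * (N x y - D x y) * (N ^ k) y j := by
        rw [← Finset.sum_sub_distrib]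
        refine Finset.sum_congr rfl fun x _ => ?_
        rw [← Finset.sum_sub_distrib]
        exact Finset.sum_congr rfl fun y _ => by ring
      linarith
    have h3 := hεle i j
    linarith
  have hθ0 : 0 ≤ 1 - ε := by
    obtain ⟨i⟩ := (inferInstance : Nonempty n)
    nlinarith [hstep i i, hDk0 m i i, hNm i i]
  have hpow : ∀ s : ℕ, ∀ i j, (D ^ (m * s)) i j ≤ (1 - ε) ^ s * (N ^ (m * s)) i j := by
    intro s
    induction s with
    | zero => intro i j; simp
    | succ s ih =>
      have e : ∀ X : Matrix n n ℝ, X ^ (m * (s + 1)) = X ^ (m * s) * X ^ m := by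
        intro X
        rw [← pow_add, Nat.mul_succ]
      intro i j
      rw [e D, e N, pow_succ]
      exact mul_le_scaled (hDk0 _) (hDk0 _) ih hstep i j
  set ρr : ℝ := (spectralRadius ℂ (N.map Complex.ofReal)).toReal with hρr
  have hgel : Tendsto (fun t : ℕ => ‖N ^ t‖ ^ (1 / t : ℝ)) atTop (𝓝 ρr) := gelfand N
  have hmono : Tendsto (fun s : ℕ => m * (s + 1)) atTop atTop :=
    tendsto_atTop_mono
      (fun s => le_trans (Nat.le_succ s) (by simpa using Nat.mul_le_mul_right (s + 1) hm1))
      tendsto_id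
  have hsubseq : Tendsto
      (fun s : ℕ => ‖N ^ (m * (s + 1))‖ ^ (1 / (m * (s + 1) : ℕ) : ℝ)) atTop (𝓝 ρr) :=
    hgel.comp hmono
  obtain ⟨i0⟩ := (inferInstance : Nonempty n)
  have hρpos : 0 < ρr := by
    set δ : ℝ := (N ^ m) i0 i0 with hδ
    have hδpos : 0 < δ := hNm i0 i0
    have hlow : ∀ s : ℕ,
        δ ^ ((1 : ℝ) / m) ≤ ‖N ^ (m * (s + 1))‖ ^ (1 / (m * (s + 1) : ℕ) : ℝ) := by
      intro s
      have htpos : 0 < m * (s + 1) := Nat.mul_pos hm1 (Nat.succ_pos s)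
      have h1 : δ ^ (s + 1) ≤ (N ^ (m * (s + 1))) i0 i0 := by
        rw [pow_mul]
        exact diag_pow_ge (pow_entry_nonneg hN0 m) i0 (s + 1)
      have h2 : δ ^ (s + 1) ≤ ‖N ^ (m * (s + 1))‖ :=
        h1.trans (entry_le_norm (pow_entry_nonneg hN0 _) i0 i0)
      have h3 : δ ^ ((1 : ℝ) / m) = (δ ^ (s + 1)) ^ (1 / (m * (s + 1) : ℕ) : ℝ) := by
        rw [← Real.rpow_natCast δ (s + 1), ← Real.rpow_mul hδpos.le]
        congr 1
        have : ((m * (s + 1) : ℕ) : ℝ) = (m : ℝ) * ((s : ℝ) + 1) := by push_cast; ring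
        rw [this]
        have hms : (m : ℝ) ≠ 0 := Nat.cast_ne_zero.2 (by omega)
        have hss : ((s : ℝ) + 1) ≠ 0 := by positivity
        field_simp
        norm_cast
      rw [h3]
      exact Real.rpow_le_rpow (pow_nonneg hδpos.le _) h2 (by positivity)
    have := ge_of_tendsto hsubseq (Filter.Eventually.of_forall hlow)
    exact lt_of_lt_of_le (Real.rpow_pos_of_pos hδpos _) this
  have hbound : ∀ μ : ℂ, (D.map Complex.ofReal).charpoly.IsRoot μ →
      ‖μ‖ ≤ (1 - ε) ^ ((1 : ℝ) / m) * ρr := by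
    intro μ hμ
    obtain ⟨v, hv0, hv⟩ := exists_eigenvector _ hμ
    set w : n → ℝ := fun i => ‖v i‖ with hw
    have hw0 : ∀ i, 0 ≤ w i := fun i => norm_nonneg _
    obtain ⟨i₁, hi₁⟩ : ∃ i, v i ≠ 0 := Function.ne_iff.1 hv0
    obtain ⟨i₀, -, hi₀⟩ := Finset.exists_max_image Finset.univ w Finset.univ_nonempty
    have hwi₀ : 0 < w i₀ := lt_of_lt_of_le (norm_pos_iff.2 hi₁) (hi₀ i₁ (Finset.mem_univ _))
    have hvec : ∀ t : ℕ, ‖μ‖ ^ t * w i₀ ≤ ∑ j, (D ^ t) i₀ j * w j := by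
      intro t
      have hvt : ((D ^ t).map Complex.ofReal).mulVec v = μ ^ t • v := by
        rw [← map_pow']
        induction t with
        | zero => simp [Matrix.one_mulVec]
        | succ t ih =>
          rw [pow_succ, ← Matrix.mulVec_mulVec, hv, Matrix.mulVec_smul, ih, smul_smul,
            pow_succ, mul_comm μ]
      have hentry : μ ^ t * v i₀ = ∑ j, ((D ^ t).map Complex.ofReal) i₀ j * v j := by
        have := congrFun hvt i₀
        simp only [Matrix.mulVec, dotProduct, Pi.smul_apply, smul_eq_mul] at this
        rw [← this]
      calc ‖μ‖ ^ t * w i₀ = ‖μ ^ t * v i₀‖ := by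
            rw [norm_mul, norm_pow]
        _ = ‖∑ j, ((D ^ t).map Complex.ofReal) i₀ j * v j‖ := by rw [hentry]
        _ ≤ ∑ j, ‖((D ^ t).map Complex.ofReal) i₀ j * v j‖ :=
            norm_sum_le _ _
        _ = ∑ j, (D ^ t) i₀ j * w j := by
            refine Finset.sum_congr rfl fun j _ => ?_
            rw [norm_mul, Matrix.map_apply, Complex.norm_of_nonneg (hDk0 t i₀ j)]
    have hineq : ∀ s : ℕ,
        ‖μ‖ ^ (m * (s + 1)) ≤ (1 - ε) ^ (s + 1) * ‖N ^ (m * (s + 1))‖ := by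
      intro s
      have h1 := hvec (m * (s + 1))
      have h2 : ∑ j, (D ^ (m * (s + 1))) i₀ j * w j
          ≤ (1 - ε) ^ (s + 1) * ∑ j, (N ^ (m * (s + 1))) i₀ j * w j := by
        rw [Finset.mul_sum]
        refine Finset.sum_le_sum fun j _ => ?_
        calc (D ^ (m * (s + 1))) i₀ j * w j
            ≤ ((1 - ε) ^ (s + 1) * (N ^ (m * (s + 1))) i₀ j) * w j :=
              mul_le_mul_of_nonneg_right (hpow (s + 1) i₀ j) (hw0 j)
          _ = (1 - ε) ^ (s + 1) * ((N ^ (m * (s + 1))) i₀ j * w j) := by ring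
      have h3 : ∑ j, (N ^ (m * (s + 1))) i₀ j * w j ≤ ‖N ^ (m * (s + 1))‖ * w i₀ := by
        calc ∑ j, (N ^ (m * (s + 1))) i₀ j * w j
            ≤ ∑ j, (N ^ (m * (s + 1))) i₀ j * w i₀ :=
              Finset.sum_le_sum fun j _ =>
                mul_le_mul_of_nonneg_left (hi₀ j (Finset.mem_univ j)) (hNk0 _ i₀ j)
          _ = (∑ j, (N ^ (m * (s + 1))) i₀ j) * w i₀ := (Finset.sum_mul _ _ _).symm
          _ ≤ ‖N ^ (m * (s + 1))‖ * w i₀ :=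
              mul_le_mul_of_nonneg_right (row_sum_le_norm (hNk0 _) i₀) (hw0 i₀)
      have hcomb : ‖μ‖ ^ (m * (s + 1)) * w i₀
          ≤ ((1 - ε) ^ (s + 1) * ‖N ^ (m * (s + 1))‖) * w i₀ := by
        have h4 := h1.trans (h2.trans (mul_le_mul_of_nonneg_left h3 (pow_nonneg hθ0 _)))
        calc ‖μ‖ ^ (m * (s + 1)) * w i₀
            ≤ (1 - ε) ^ (s + 1) * (‖N ^ (m * (s + 1))‖ * w i₀) := h4
          _ = ((1 - ε) ^ (s + 1) * ‖N ^ (m * (s + 1))‖) * w i₀ := by ring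
      exact le_of_mul_le_mul_right hcomb hwi₀
    have hfinal : ∀ s : ℕ, ‖μ‖
        ≤ (1 - ε) ^ ((1 : ℝ) / m) * ‖N ^ (m * (s + 1))‖ ^ (1 / (m * (s + 1) : ℕ) : ℝ) := by
      intro s
      have htpos : 0 < m * (s + 1) := Nat.mul_pos hm1 (Nat.succ_pos s)
      have htr : (0 : ℝ) < ((m * (s + 1) : ℕ) : ℝ) := by exact_mod_cast htpos
      have habs0 : (0 : ℝ) ≤ ‖μ‖ := norm_nonneg _
      have h2 : ‖μ‖
          = (‖μ‖ ^ (m * (s + 1))) ^ (1 / (m * (s + 1) : ℕ) : ℝ) := by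
        rw [← Real.rpow_natCast ‖μ‖ (m * (s + 1)), ← Real.rpow_mul habs0,
          mul_one_div, div_self htr.ne', Real.rpow_one]
      rw [h2]
      calc (‖μ‖ ^ (m * (s + 1))) ^ (1 / (m * (s + 1) : ℕ) : ℝ)
          ≤ ((1 - ε) ^ (s + 1) * ‖N ^ (m * (s + 1))‖) ^ (1 / (m * (s + 1) : ℕ) : ℝ) :=
            Real.rpow_le_rpow (pow_nonneg habs0 _) (hineq s) (by positivity)
        _ = ((1 - ε) ^ (s + 1)) ^ (1 / (m * (s + 1) : ℕ) : ℝ)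
            * ‖N ^ (m * (s + 1))‖ ^ (1 / (m * (s + 1) : ℕ) : ℝ) :=
            Real.mul_rpow (pow_nonneg hθ0 _) (norm_nonneg _)
        _ = (1 - ε) ^ ((1 : ℝ) / m)
            * ‖N ^ (m * (s + 1))‖ ^ (1 / (m * (s + 1) : ℕ) : ℝ) := by
            congr 1
            rw [← Real.rpow_natCast (1 - ε) (s + 1), ← Real.rpow_mul hθ0]
            congr 1
            have hcast : ((m * (s + 1) : ℕ) : ℝ) = (m : ℝ) * ((s : ℝ) + 1) := by
              push_cast; ring
            rw [hcast]
            have hms : (m : ℝ) ≠ 0 := Nat.cast_ne_zero.2 (by omega)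
            have hss : ((s : ℝ) + 1) ≠ 0 := by positivity
            push_cast
            field_simp
    exact ge_of_tendsto (hsubseq.const_mul _) (Filter.Eventually.of_forall hfinal)
  have hlt : (1 - ε) ^ ((1 : ℝ) / m) * ρr < ρr := by
    have h1 : (1 - ε) ^ ((1 : ℝ) / m) < 1 :=
      Real.rpow_lt_one hθ0 (by linarith) (by positivity)
    nlinarith
  calc perronRoot D ≤ (1 - ε) ^ ((1 : ℝ) / m) * ρr := perronRoot_le hbound
    _ < ρr := hlt
    _ ≤ perronRoot N := spectralRadius_toReal_le N


lemma blockDiagPow {p q : Type*} [Fintype p] [DecidableEq p] [Fintype q] [DecidableEq q]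
    (M : Matrix p p ℝ) (C : Matrix q q ℝ) (k : ℕ) :
    (Matrix.fromBlocks M 0 0 C) ^ k = Matrix.fromBlocks (M ^ k) 0 0 (C ^ k) := by
  induction k with
  | zero => simp [Matrix.fromBlocks_one]
  | succ k ih =>
    rw [pow_succ, pow_succ, pow_succ, ih, Matrix.fromBlocks_multiply]
    simp

lemma charpoly_zero {q : Type*} [Fintype q] [DecidableEq q] : (0 : Matrix q q ℂ).charpoly = X ^ (Fintype.card q) := by
  have h : charmatrix (0 : Matrix q q ℂ) = Matrix.diagonal (fun _ => (X : ℂ[X])) := by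
    rw [charmatrix]
    simp [Matrix.scalar]
  rw [Matrix.charpoly, h, Matrix.det_diagonal, Finset.prod_const, Finset.card_univ]

lemma perronRoot_blockDiag {p q : Type*} [Fintype p] [DecidableEq p] [Fintype q] [DecidableEq q] [Nonempty p] [Nonempty q] (M : Matrix p p ℝ) :
    perronRoot (Matrix.fromBlocks M 0 (0 : Matrix q p ℝ) (0 : Matrix q q ℝ)) = perronRoot M := by
  have hch : ((Matrix.fromBlocks M 0 (0 : Matrix q p ℝ) (0 : Matrix q q ℝ)).map
      Complex.ofReal).charpoly = (M.map Complex.ofReal).charpoly * X ^ (Fintype.card q) := by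
    rw [Matrix.fromBlocks_map, Matrix.map_zero _ Complex.ofReal_zero,
      Matrix.map_zero _ Complex.ofReal_zero, Matrix.map_zero _ Complex.ofReal_zero,
      Matrix.charpoly_fromBlocks_zero₂₁, charpoly_zero]
  have hq : Fintype.card q ≠ 0 := Fintype.card_ne_zero
  have hroot : ∀ μ : ℂ, ((Matrix.fromBlocks M 0 (0 : Matrix q p ℝ) (0 : Matrix q q ℝ)).map
      Complex.ofReal).charpoly.IsRoot μ ↔ ((M.map Complex.ofReal).charpoly.IsRoot μ ∨ μ = 0) := by
    intro μ
    rw [hch, Polynomial.IsRoot.def, Polynomial.eval_mul, mul_eq_zero, Polynomial.eval_pow,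
      Polynomial.eval_X, pow_eq_zero_iff hq]
    rfl
  refine le_antisymm (perronRoot_le fun μ hμ => ?_) (perronRoot_le fun μ hμ => ?_)
  · rcases (hroot μ).1 hμ with h | rfl
    · exact le_perronRoot' h
    · simpa using perronRoot_nonneg M
  · exact le_perronRoot' ((hroot μ).2 (Or.inl hμ))


end PFaux

/-- Let `M' = [[M, A], [B, C]]` be a square nonnegative matrix in block form
with `M` square, and suppose `M'` is primitive (some power of `M'` is
entrywise positive).  Then `A` and `B` are not both zero, and the
Perron–Frobenius eigenvalue (spectral radius) of `M` is strictly less than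
that of `M'`. -/
theorem perronRoot_block_lt (p q : ℕ) (hp : 0 < p) (hq : 0 < q)
    (M : Matrix (Fin p) (Fin p) ℝ) (A : Matrix (Fin p) (Fin q) ℝ)
    (B : Matrix (Fin q) (Fin p) ℝ) (C : Matrix (Fin q) (Fin q) ℝ)
    (hnonneg : ∀ i j, 0 ≤ Matrix.fromBlocks M A B C i j)
    (hprim : ∃ k : ℕ, ∀ i j, 0 < (Matrix.fromBlocks M A B C ^ k) i j) :
    ¬(A = 0 ∧ B = 0) ∧ perronRoot M < perronRoot (Matrix.fromBlocks M A B C) := by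
  haveI hpne : Nonempty (Fin p) := ⟨⟨0, hp⟩⟩
  haveI hqne : Nonempty (Fin q) := ⟨⟨0, hq⟩⟩
  obtain ⟨i0⟩ := id hpne
  obtain ⟨j0⟩ := id hqne
  obtain ⟨k, hk⟩ := hprim
  set N := Matrix.fromBlocks M A B C with hN
  -- k ≥ 1
  have hk1 : 1 ≤ k := by
    by_contra hcon
    push_neg at hcon
    interval_cases k
    have := hk (Sum.inl i0) (Sum.inr j0)
    rw [pow_zero, Matrix.one_apply_ne (by simp)] at this
    exact lt_irrefl 0 this
  -- A and B are not both zero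
  have hAB : ¬(A = 0 ∧ B = 0) := by
    rintro ⟨rfl, rfl⟩
    have h1 := hk (Sum.inl i0) (Sum.inr j0)
    rw [PFaux.blockDiagPow] at h1
    simp only [Matrix.fromBlocks_apply₁₂, Matrix.zero_apply] at h1
    exact lt_irrefl 0 h1
  refine ⟨hAB, ?_⟩
  -- strict inequality via the key lemma
  set D := Matrix.fromBlocks M 0 (0 : Matrix (Fin q) (Fin p) ℝ) (0 : Matrix (Fin q) (Fin q) ℝ)
    with hD
  have hD0 : ∀ i j, 0 ≤ D i j := by
    rintro (i | i) (j | j)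
    · exact hnonneg (Sum.inl i) (Sum.inl j)
    · simp [hD]
    · simp [hD]
    · simp [hD]
  have hDN : ∀ i j, D i j ≤ N i j := by
    rintro (i | i) (j | j)
    · exact le_rfl
    · simpa [hD, hN] using hnonneg (Sum.inl i) (Sum.inr j)
    · simpa [hD, hN] using hnonneg (Sum.inr i) (Sum.inl j)
    · simpa [hD, hN] using hnonneg (Sum.inr i) (Sum.inr j)
  have hne : ∃ a b, D a b < N a b := by
    by_cases hA : A = 0
    · have hB : B ≠ 0 := fun hB => hAB ⟨hA, hB⟩
      obtain ⟨i, j, hij⟩ : ∃ i j, B i j ≠ 0 := by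
        by_contra hcon
        push_neg at hcon
        exact hB (by ext i j; simp [hcon i j])
      refine ⟨Sum.inr i, Sum.inl j, ?_⟩
      have h0 : 0 ≤ B i j := by simpa [hN] using hnonneg (Sum.inr i) (Sum.inl j)
      have : D (Sum.inr i) (Sum.inl j) = 0 := by simp [hD]
      rw [this]
      simpa [hN] using lt_of_le_of_ne h0 (Ne.symm hij)
    · obtain ⟨i, j, hij⟩ : ∃ i j, A i j ≠ 0 := by
        by_contra hcon
        push_neg at hcon
        exact hA (by ext i j; simp [hcon i j])
      refine ⟨Sum.inl i, Sum.inr j, ?_⟩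
      have h0 : 0 ≤ A i j := by simpa [hN] using hnonneg (Sum.inl i) (Sum.inr j)
      have : D (Sum.inl i) (Sum.inr j) = 0 := by simp [hD]
      rw [this]
      simpa [hN] using lt_of_le_of_ne h0 (Ne.symm hij)
  have hkey := PFaux.key hD0 hDN hne hk1 hk
  rwa [hD, PFaux.perronRoot_blockDiag M] at hkey
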